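/- Let a, b be positive integers and set e₁ = (1,0) ∈ ℂ². The ℤ-span of {e₁, I·e₁, J·e₁, K·e₁} = {(1,0), (0,−√a·i), (0,√b), (√(ab)·i, 0)} is a lattice (discrete cocompact subgroup) in ℂ² ≅ ℝ⁴, and the symplectic form ω = Im h (with h of signature (1,1)) takes values in √(ab)·ℤ on this lattice. -/

import Mathlib

open Matrix Complex

noncomputable section

set_option maxHeartbeats 1000000 in
theorem quaternion_order_gives_lattice (a b : ℕ) (ha : 0 < a) (hb : 0 < b) :
    let v₁ : Fin 2 → ℂ := ![1, 0]
    let v₂ : Fin 2 → ℂ := ![0, -((Real.sqrt a : ℂ) * Complex.I)]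
    let v₃ : Fin 2 → ℂ := ![0, (Real.sqrt b : ℂ)]
    let v₄ : Fin 2 → ℂ := ![(Real.sqrt (a * b) : ℂ) * Complex.I, 0]
    let ω : (Fin 2 → ℂ) → (Fin 2 → ℂ) → ℝ := fun v w =>
      (v 0 * (starRingEnd ℂ) (w 0) - v 1 * (starRingEnd ℂ) (w 1)).im
    let L : Submodule ℤ (Fin 2 → ℂ) := Submodule.span ℤ {v₁, v₂, v₃, v₄}
    DiscreteTopology L ∧
    Submodule.span ℝ (L : Set (Fin 2 → ℂ)) = ⊤ ∧
    (∀ v ∈ L, ∀ w ∈ L, ∃ k : ℤ, ω v w = k * Real.sqrt (a * b)) := by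
  intro v₁ v₂ v₃ v₄ ω L
  have ha' : (0:ℝ) < (a:ℝ) := by exact_mod_cast ha
  have hb' : (0:ℝ) < (b:ℝ) := by exact_mod_cast hb
  have hab : (0:ℝ) < Real.sqrt ((a:ℝ) * (b:ℝ)) := Real.sqrt_pos.mpr (by positivity)
  have hsa : (0:ℝ) < Real.sqrt a := Real.sqrt_pos.mpr ha'
  have hsb : (0:ℝ) < Real.sqrt b := Real.sqrt_pos.mpr hb'
  -- linear independence
  have hli : LinearIndependent ℝ ![v₁, v₂, v₃, v₄] := by
    rw [Fintype.linearIndependent_iff]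
    intro g hg
    have h0 := congrFun hg 0
    have h1 := congrFun hg 1
    simp only [Fin.sum_univ_four, Pi.add_apply, Pi.smul_apply, v₁, v₂, v₃, v₄,
      Matrix.cons_val_zero, Matrix.cons_val_one, Matrix.head_cons, Pi.zero_apply,
      Matrix.cons_val_two, Matrix.cons_val_three, Matrix.tail_cons,
      Matrix.cons_val', Matrix.empty_val', Matrix.cons_val_fin_one,
      Complex.real_smul, smul_eq_mul] at h0 h1
    rw [Complex.ext_iff] at h0 h1
    simp only [Complex.add_im, Complex.add_re, Complex.mul_im, Complex.mul_re,
      Complex.I_re, Complex.I_im, Complex.ofReal_re, Complex.ofReal_im,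
      Complex.one_re, Complex.one_im, Complex.zero_re, Complex.zero_im,
      Complex.neg_re, Complex.neg_im, Complex.mul_im, mul_zero, zero_mul,
      mul_one, add_zero, zero_add, sub_zero, zero_sub, neg_zero] at h0 h1
    obtain ⟨e1, e2⟩ := h0
    obtain ⟨e3, e4⟩ := h1
    have hg0 : g 0 = 0 := e1
    have hg1 : g 1 = 0 := by
      rcases mul_eq_zero.mp (show g 1 * Real.sqrt a = 0 by linarith) with h | h
      · exact h
      · exact absurd h hsa.ne'
    have hg2 : g 2 = 0 := by
      rcases mul_eq_zero.mp (show g 2 * Real.sqrt b = 0 by linarith) with h | h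
      · exact h
      · exact absurd h hsb.ne'
    have hg3 : g 3 = 0 := by
      rcases mul_eq_zero.mp (show g 3 * Real.sqrt ((a:ℝ)*(b:ℝ)) = 0 by linarith) with h | h
      · exact h
      · exact absurd h hab.ne'
    intro i
    fin_cases i
    · exact hg0
    · exact hg1
    · exact hg2
    · exact hg3
  have hcard : Fintype.card (Fin 4) = Module.finrank ℝ (Fin 2 → ℂ) := by
    simp [Module.finrank_pi_fintype, Complex.finrank_real_complex]
  let B : Module.Basis (Fin 4) ℝ (Fin 2 → ℂ) := basisOfLinearIndependentOfCardEqFinrank hli hcard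
  have hB : Set.range B = {v₁, v₂, v₃, v₄} := by
    rw [show ⇑B = ![v₁, v₂, v₃, v₄] from
      coe_basisOfLinearIndependentOfCardEqFinrank hli hcard]
    ext x
    simp only [Matrix.range_cons, Matrix.range_empty, Set.union_empty,
      Set.mem_insert_iff, Set.mem_singleton_iff, Set.mem_union]
  have hL : L = Submodule.span ℤ (Set.range B) := by rw [hB]
  refine ⟨?_, ?_, ?_⟩
  · rw [hL]; infer_instance
  · rw [hL]; exact ZSpan.span_top B
  · -- bilinear map
    have addl : ∀ (m₁ m₂ n : Fin 2 → ℂ), ω (m₁ + m₂) n = ω m₁ n + ω m₂ n := by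
      intro m₁ m₂ n
      simp only [ω, Pi.add_apply, add_mul]
      simp [Complex.add_im, Complex.sub_im]
      ring
    have smull : ∀ (c : ℤ) (m n : Fin 2 → ℂ), ω (c • m) n = c • ω m n := by
      intro c m n
      simp only [ω, Pi.smul_apply, zsmul_eq_mul, smul_eq_mul]
      push_cast
      simp [Complex.mul_im, Complex.sub_im, mul_assoc]
      ring
    have addr : ∀ (m n₁ n₂ : Fin 2 → ℂ), ω m (n₁ + n₂) = ω m n₁ + ω m n₂ := by
      intro m n₁ n₂
      simp only [ω, Pi.add_apply, _root_.map_add, mul_add]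
      simp [Complex.add_im, Complex.sub_im]
      ring
    have smulr : ∀ (c : ℤ) (m n : Fin 2 → ℂ), ω m (c • n) = c • ω m n := by
      intro c m n
      simp only [ω, Pi.smul_apply, zsmul_eq_mul, smul_eq_mul, _root_.map_mul, map_intCast]
      push_cast
      simp [Complex.mul_im, Complex.sub_im]
      ring
    let Bf : (Fin 2 → ℂ) →ₗ[ℤ] (Fin 2 → ℂ) →ₗ[ℤ] ℝ :=
      LinearMap.mk₂ ℤ ω addl smull addr smulr
    let M : Submodule ℤ ℝ := Submodule.span ℤ {Real.sqrt ((a:ℝ) * (b:ℝ))}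
    have mem1 : Real.sqrt ((a:ℝ)*(b:ℝ)) ∈ M := Submodule.mem_span_singleton_self _
    have memneg : -Real.sqrt ((a:ℝ)*(b:ℝ)) ∈ M := neg_mem mem1
    have mem0 : (0:ℝ) ∈ M := zero_mem _
    have hmul : Real.sqrt (a:ℝ) * Real.sqrt (b:ℝ) = Real.sqrt ((a:ℝ)*(b:ℝ)) :=
      (Real.sqrt_mul ha'.le _).symm
    have key : ∀ x ∈ ({v₁, v₂, v₃, v₄} : Set (Fin 2 → ℂ)),
        ∀ y ∈ ({v₁, v₂, v₃, v₄} : Set (Fin 2 → ℂ)), Bf x y ∈ M := by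
      intro x hx y hy
      simp only [Set.mem_insert_iff, Set.mem_singleton_iff] at hx hy
      rcases hx with rfl | rfl | rfl | rfl <;> rcases hy with rfl | rfl | rfl | rfl <;>
        simp only [Bf, LinearMap.mk₂_apply, ω, v₁, v₂, v₃, v₄,
          Matrix.cons_val_zero, Matrix.cons_val_one, Matrix.head_cons,
          _root_.map_neg, _root_.map_mul, _root_.map_zero, _root_.map_one, Complex.conj_I, Complex.conj_ofReal] <;>
        simp [Complex.mul_im, Complex.mul_re] <;>
        first
          | exact mem0
          | exact mem1
          | exact memneg
          | (rw [hmul]; exact mem1)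
          | (rw [mul_comm (Real.sqrt (a:ℝ)) (Real.sqrt (b:ℝ))]; rw [hmul]; exact mem1)
          | (rw [mul_comm (Real.sqrt (b:ℝ)) (Real.sqrt (a:ℝ))]; rw [hmul]; exact mem1)
    have H : ∀ v ∈ L, ∀ w ∈ L, Bf v w ∈ M := by
      intro v hv
      induction hv using Submodule.span_induction with
      | mem x hx =>
          intro w hw
          have hle : L ≤ M.comap (Bf x) := Submodule.span_le.mpr (fun y hy => key x hx y hy)
          exact hle hw
      | zero => intro w hw; simp [mem0]
      | add x y _ _ hx hy =>
          intro w hw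
          have : Bf (x + y) w = Bf x w + Bf y w := by simp
          rw [this]; exact add_mem (hx w hw) (hy w hw)
      | smul c x _ hx =>
          intro w hw
          have : Bf (c • x) w = c • Bf x w := by rw [_root_.map_smul, LinearMap.smul_apply]
          rw [this]; exact Submodule.smul_mem _ _ (hx w hw)
    intro v hv w hw
    obtain ⟨k, hk⟩ := Submodule.mem_span_singleton.mp (H v hv w hw)
    exact ⟨k, by rw [show ω v w = Bf v w from rfl, ← hk, zsmul_eq_mul]⟩
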